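/- arXiv:1810.07131 — 5 statements merged into one kernel-verified Lean document; each statement's English description precedes it below -/
import Mathlib

section
/- Let d ≥ 1 be an integer, δ > 0 and k > 0, and define g(α) = (kδ/2)^{α−d} Γ((d−α)/2)/Γ(α/2) − 2/((d−α) Γ(d/2)) for α ∈ (max(0, d−2), d) ∪ (d, d+2). Then lim_{α→d} g(α) = (1/Γ(d/2)) [ 2 log(2/(kδ)) + Γ'(1) + Γ'(d/2)/Γ(d/2) ]; in particular g extends to a continuous function of α on (max(0, d−2), d+2). -/
open Filter Set

/-- For `d ≥ 1`, `δ > 0`, `k > 0`, the function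
`g(α) = (kδ/2)^{α−d} Γ((d−α)/2)/Γ(α/2) − 2/((d−α) Γ(d/2))`, defined for
`α ∈ (max(0,d−2), d) ∪ (d, d+2)`, satisfies
`lim_{α→d} g(α) = (1/Γ(d/2)) [ 2 log(2/(kδ)) + Γ'(1) + Γ'(d/2)/Γ(d/2) ]`;
in particular `g` extends to a continuous function of `α` on `(max(0,d−2), d+2)`. -/
theorem removable_singularity_at_d (d : ℕ) (hd : 1 ≤ d) (δ k : ℝ) (hδ : 0 < δ) (hk : 0 < k) :
    Filter.Tendsto
      (fun α : ℝ =>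
        (k * δ / 2) ^ (α - (d : ℝ)) * Real.Gamma (((d : ℝ) - α) / 2) / Real.Gamma (α / 2) -
          2 / (((d : ℝ) - α) * Real.Gamma ((d : ℝ) / 2)))
      (nhdsWithin (d : ℝ) {(d : ℝ)}ᶜ)
      (nhds ((1 / Real.Gamma ((d : ℝ) / 2)) *
        (2 * Real.log (2 / (k * δ)) + deriv Real.Gamma 1 +
          deriv Real.Gamma ((d : ℝ) / 2) / Real.Gamma ((d : ℝ) / 2)))) ∧
    ∃ G : ℝ → ℝ,
      ContinuousOn G (Set.Ioo (max 0 ((d : ℝ) - 2)) ((d : ℝ) + 2)) ∧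
      ∀ α ∈ Set.Ioo (max 0 ((d : ℝ) - 2)) ((d : ℝ) + 2), α ≠ (d : ℝ) →
        G α = (k * δ / 2) ^ (α - (d : ℝ)) * Real.Gamma (((d : ℝ) - α) / 2) /
            Real.Gamma (α / 2) -
          2 / (((d : ℝ) - α) * Real.Gamma ((d : ℝ) / 2)) := by
  set c : ℝ := k * δ / 2 with hc_def
  have hc : 0 < c := by positivity
  have hdpos : (0:ℝ) < d := by exact_mod_cast Nat.lt_of_lt_of_le Nat.zero_lt_one hd
  have hΓd : Real.Gamma ((d:ℝ)/2) ≠ 0 := (Real.Gamma_pos_of_pos (by positivity)).ne'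
  set g : ℝ → ℝ := fun α =>
    c ^ (α - (d : ℝ)) * Real.Gamma (((d : ℝ) - α) / 2) / Real.Gamma (α / 2) -
      2 / (((d : ℝ) - α) * Real.Gamma ((d : ℝ) / 2)) with hg_def
  set L : ℝ := (1 / Real.Gamma ((d : ℝ) / 2)) *
      (2 * Real.log (2 / (k * δ)) + deriv Real.Gamma 1 +
        deriv Real.Gamma ((d : ℝ) / 2) / Real.Gamma ((d : ℝ) / 2)) with hL_def
  set F : ℝ → ℝ := fun α =>
    c ^ (α - (d : ℝ)) * Real.Gamma (((d : ℝ) - α) / 2 + 1) / Real.Gamma (α / 2) with hF_def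
  -- derivative of the rpow factor
  have hA : HasDerivAt (fun α : ℝ => c ^ (α - (d:ℝ))) (Real.log c) (d:ℝ) := by
    have h1 : HasDerivAt (fun α : ℝ => α - (d:ℝ)) 1 (d:ℝ) := (hasDerivAt_id _).sub_const _
    have h2 := (hasDerivAt_const (d:ℝ) c).rpow h1 (by simpa using hc)
    simpa using h2
  -- derivative of Gamma at 1 and at d/2
  have h1ne : ∀ m : ℕ, (1:ℝ) ≠ -m := by
    intro m h; have : (0:ℝ) ≤ m := Nat.cast_nonneg m; linarith
  have hdne : ∀ m : ℕ, (d:ℝ)/2 ≠ -m := by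
    intro m h; have : (0:ℝ) ≤ m := Nat.cast_nonneg m; linarith
  have hB : HasDerivAt (fun α : ℝ => Real.Gamma (((d:ℝ) - α)/2 + 1))
      (deriv Real.Gamma 1 * (-(1/2))) (d:ℝ) := by
    have hu : HasDerivAt (fun α : ℝ => ((d:ℝ) - α)/2 + 1) (-(1/2)) (d:ℝ) := by
      have h' : HasDerivAt (fun α : ℝ => ((d:ℝ) - α)) (-1) (d:ℝ) := (hasDerivAt_id _).const_sub _
      have := (h'.div_const 2).add_const 1
      exact this.congr_deriv (by norm_num)
    have hg1 : HasDerivAt Real.Gamma (deriv Real.Gamma 1) (((d:ℝ) - d)/2 + 1) := by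
      rw [show ((d:ℝ) - d)/2 + 1 = 1 by ring]
      exact (Real.differentiableAt_Gamma h1ne).hasDerivAt
    exact hg1.comp (d:ℝ) hu
  have hC : HasDerivAt (fun α : ℝ => Real.Gamma (α/2))
      (deriv Real.Gamma ((d:ℝ)/2) * (1/2)) (d:ℝ) := by
    have hu : HasDerivAt (fun α : ℝ => α/2) (1/2) (d:ℝ) := by
      simpa using (hasDerivAt_id (d:ℝ)).div_const 2
    exact ((Real.differentiableAt_Gamma hdne).hasDerivAt).comp (d:ℝ) hu
  have hAd : c ^ ((d:ℝ) - d) = 1 := by rw [sub_self, Real.rpow_zero]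
  have hBd : Real.Gamma (((d:ℝ) - d)/2 + 1) = 1 := by
    rw [show ((d:ℝ) - d)/2 + 1 = 1 by ring, Real.Gamma_one]
  have hA' : HasDerivAt (fun α : ℝ => c ^ (α - (d:ℝ))) (Real.log c) (d:ℝ) := hA
  have hF' : HasDerivAt F
      (((Real.log c * Real.Gamma (((d:ℝ) - d)/2 + 1) +
          c ^ ((d:ℝ) - d) * (deriv Real.Gamma 1 * (-(1/2)))) * Real.Gamma ((d:ℝ)/2) -
        c ^ ((d:ℝ) - d) * Real.Gamma (((d:ℝ) - d)/2 + 1) *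
          (deriv Real.Gamma ((d:ℝ)/2) * (1/2))) / Real.Gamma ((d:ℝ)/2) ^ 2) (d:ℝ) := by
    have := (hA'.mul hB).div hC (by simpa using hΓd)
    simpa [hF_def, Pi.mul_def, Pi.div_def] using this
  set v : ℝ := ((Real.log c * Real.Gamma (((d:ℝ) - d)/2 + 1) +
          c ^ ((d:ℝ) - d) * (deriv Real.Gamma 1 * (-(1/2)))) * Real.Gamma ((d:ℝ)/2) -
        c ^ ((d:ℝ) - d) * Real.Gamma (((d:ℝ) - d)/2 + 1) *
          (deriv Real.Gamma ((d:ℝ)/2) * (1/2))) / Real.Gamma ((d:ℝ)/2) ^ 2 with hv_def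
  have hslope : Tendsto (slope F (d:ℝ)) (nhdsWithin (d:ℝ) {(d:ℝ)}ᶜ) (nhds v) :=
    hasDerivAt_iff_tendsto_slope.mp hF'
  -- value of the limit
  have hval : (-2) * v = L := by
    have hlog : Real.log c = Real.log (k * δ) - Real.log 2 := by
      rw [hc_def, Real.log_div (by positivity) (by norm_num)]
    have hlog2 : Real.log (2 / (k * δ)) = Real.log 2 - Real.log (k * δ) := by
      rw [Real.log_div (by norm_num) (by positivity)]
    rw [hv_def, hL_def, hAd, hBd, hlog, hlog2]
    field_simp
    ring
  -- equality of g with -2 * slope, away from d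
  have hFd : F (d:ℝ) = 1 / Real.Gamma ((d:ℝ)/2) := by
    rw [hF_def]; simp only [hAd, hBd]; ring
  have heq : ∀ᶠ α in nhdsWithin (d:ℝ) {(d:ℝ)}ᶜ, g α = (-2) * slope F (d:ℝ) α := by
    filter_upwards [self_mem_nhdsWithin,
      nhdsWithin_le_nhds (eventually_gt_nhds hdpos)] with α (hα : α ≠ (d:ℝ)) (hαpos : 0 < α)
    have hΓα : Real.Gamma (α/2) ≠ 0 := (Real.Gamma_pos_of_pos (by positivity)).ne'
    have hs : ((d:ℝ) - α)/2 ≠ 0 := by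
      intro h; apply hα; have : (d:ℝ) - α = 0 := by linarith [h]
      linarith
    have hΓeq : Real.Gamma (((d:ℝ) - α)/2) =
        Real.Gamma (((d:ℝ) - α)/2 + 1) / (((d:ℝ) - α)/2) := by
      rw [Real.Gamma_add_one hs, mul_div_cancel_left₀ _ hs]
    have hda : (d:ℝ) - α ≠ 0 := sub_ne_zero.mpr (Ne.symm hα)
    have had : α - (d:ℝ) ≠ 0 := sub_ne_zero.mpr hα
    rw [slope_def_field, hFd]
    simp only [hg_def, hF_def]
    rw [hΓeq]
    field_simp
    ring
  have hmain : Tendsto g (nhdsWithin (d:ℝ) {(d:ℝ)}ᶜ) (nhds L) := by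
    have := (hslope.const_mul (-2)).congr' (Filter.EventuallyEq.symm heq)
    rwa [hval] at this
  refine ⟨hmain, ?_⟩
  -- continuous extension
  set G : ℝ → ℝ := fun α => if α = (d:ℝ) then L else g α with hG_def
  have hGg : ∀ α : ℝ, α ≠ (d:ℝ) → G α = g α := fun α hα => if_neg hα
  refine ⟨G, ?_, fun α _ hα => hGg α hα⟩
  intro x hx
  by_cases hxd : x = (d:ℝ)
  · subst hxd
    apply ContinuousAt.continuousWithinAt
    rw [ContinuousAt, show G (d:ℝ) = L from if_pos rfl,
      ← nhdsNE_sup_pure, tendsto_sup]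
    constructor
    · refine hmain.congr' ?_
      filter_upwards [self_mem_nhdsWithin] with α (hα : α ≠ (d:ℝ))
      exact (hGg α hα).symm
    · have := tendsto_pure_nhds G (d:ℝ)
      rwa [show G (d:ℝ) = L from if_pos rfl] at this
  · apply ContinuousAt.continuousWithinAt
    have hx0 : 0 < x := lt_of_le_of_lt (le_max_left 0 _) hx.1
    have hxlt : x < (d:ℝ) + 2 := hx.2
    have hgc : ContinuousAt g x := by
      have hcA : ContinuousAt (fun α : ℝ => c ^ (α - (d:ℝ))) x := by
        have h1 : HasDerivAt (fun α : ℝ => α - (d:ℝ)) 1 x := (hasDerivAt_id _).sub_const _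
        exact ((Real.hasStrictDerivAt_const_rpow hc (x - d)).hasDerivAt.comp x
          h1).continuousAt
      have hne : ∀ m : ℕ, ((d:ℝ) - x)/2 ≠ -m := by
        intro m h
        rcases m with _ | m
        · simp at h; apply hxd; linarith
        · have h1 : ((m:ℝ) + 1) ≥ 1 := by
            have : (0:ℝ) ≤ m := Nat.cast_nonneg m; linarith
          push_cast at h
          linarith
      have hcB : ContinuousAt (fun α : ℝ => Real.Gamma (((d:ℝ) - α)/2)) x :=
        ContinuousAt.comp (g := Real.Gamma) (f := fun α : ℝ => ((d:ℝ) - α)/2) (x := x)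
          (Real.differentiableAt_Gamma hne).continuousAt (by fun_prop)
      have hxne : ∀ m : ℕ, x/2 ≠ -m := by
        intro m h; have : (0:ℝ) ≤ m := Nat.cast_nonneg m; linarith
      have hcC : ContinuousAt (fun α : ℝ => Real.Gamma (α/2)) x :=
        ContinuousAt.comp (g := Real.Gamma) (f := fun α : ℝ => α/2) (x := x)
          (Real.differentiableAt_Gamma hxne).continuousAt (by fun_prop)
      have hΓx : Real.Gamma (x/2) ≠ 0 := (Real.Gamma_pos_of_pos (by positivity)).ne'
      have hda : ((d:ℝ) - x) * Real.Gamma ((d:ℝ)/2) ≠ 0 :=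
        mul_ne_zero (sub_ne_zero.mpr (Ne.symm hxd)) hΓd
      exact (((hcA.mul hcB).div hcC hΓx).sub
        (continuousAt_const.div ((continuous_const.sub continuous_id).continuousAt.mul
          continuousAt_const) hda))
    refine hgc.congr ?_
    filter_upwards [isOpen_compl_singleton.mem_nhds hxd] with α (hα : α ≠ (d:ℝ))
    exact (hGg α hα).symm
end

section
/- Let α, β be real numbers, neither of which is a non-positive integer, let z ≠ 0 be real, and set a_m = (α)_m (β)_m / (−z)^m for integers m ≥ 0, and D_n^{(k)} = Σ_{j=0}^k C(k,j) (−1)^{k−j} / a_{n+j+1} for integers n ≥ 0, k ≥ 0, with the conventions D_n^{(−1)} = D_n^{(−2)} = 0. Then for all integers n ≥ 0 and k ≥ 0, (α+n+k+1)(β+n+k+1) D_n^{(k+1)} + [ z + k(α+β+2n+2k+1) + (α+n+k+1)(β+n+k+1) ] D_n^{(k)} + k(α+β+2n+3k) D_n^{(k−1)} + k(k−1) D_n^{(k−2)} = 0. -/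
/-- The Pochhammer symbol (rising factorial) `(x)_n = x(x+1)⋯(x+n−1)`, with `(x)_0 = 1`. -/
noncomputable def poch (x : ℝ) : ℕ → ℝ
  | 0 => 1
  | n + 1 => poch x n * (x + n)

lemma poch_ne_zero' (x : ℝ) (hx : ∀ m : ℕ, x ≠ -(m : ℝ)) : ∀ m, poch x m ≠ 0
  | 0 => one_ne_zero
  | m + 1 => by
      refine mul_ne_zero (poch_ne_zero' x hx m) ?_
      have := hx m
      intro h
      apply this
      linarith

/-- With `a_m = (α)_m (β)_m / (−z)^m` and
`D_n^{(k)} = Σ_{j=0}^k C(k,j) (−1)^{k−j} / a_{n+j+1}` (and `D_n^{(−1)} = D_n^{(−2)} = 0`),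
the denominators of Drummond's sequence transformation satisfy, for all `n, k ≥ 0`,
`(α+n+k+1)(β+n+k+1) D_n^{(k+1)} + [z + k(α+β+2n+2k+1) + (α+n+k+1)(β+n+k+1)] D_n^{(k)}
 + k(α+β+2n+3k) D_n^{(k−1)} + k(k−1) D_n^{(k−2)} = 0`.
(The truncated subtractions `k − 1`, `k − 2` are harmless: the corresponding coefficients
`k(α+β+2n+3k)` and `k(k−1)` vanish for `k = 0` resp. `k ∈ {0, 1}`.) -/
theorem drummond_denominator_recurrence
    (α β z : ℝ) (hα : ∀ m : ℕ, α ≠ -(m : ℝ)) (hβ : ∀ m : ℕ, β ≠ -(m : ℝ)) (hz : z ≠ 0)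
    (a : ℕ → ℝ) (ha : ∀ m : ℕ, a m = poch α m * poch β m / (-z) ^ m)
    (D : ℕ → ℕ → ℝ)
    (hD : ∀ k n : ℕ, D k n =
      ∑ j ∈ Finset.range (k + 1), (Nat.choose k j : ℝ) * (-1) ^ (k - j) / a (n + j + 1)) :
    ∀ n k : ℕ,
      (α + n + k + 1) * (β + n + k + 1) * D (k + 1) n +
        (z + k * (α + β + 2 * n + 2 * k + 1) + (α + n + k + 1) * (β + n + k + 1)) * D k n +
        k * (α + β + 2 * n + 3 * k) * D (k - 1) n +
        k * ((k : ℝ) - 1) * D (k - 2) n = 0 := by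
  set f : ℕ → ℝ := fun m => 1 / a (m + 1) with hf
  have hDf : ∀ k n : ℕ, D k n = (fwdDiff (1:ℕ))^[k] f n := by
    intro k n
    rw [hD, fwdDiff_iter_eq_sum_shift]
    refine Finset.sum_congr rfl fun j hj => ?_
    simp only [hf, smul_eq_mul, mul_one, zsmul_eq_mul]
    push_cast
    ring_nf
  -- Pascal relation
  have pascal : ∀ k n : ℕ, D (k + 1) n = D k (n + 1) - D k n := by
    intro k n
    rw [hDf, hDf, hDf, Function.iterate_succ_apply']
    simp [fwdDiff]
  have hD0 : ∀ n : ℕ, D 0 n = 1 / a (n + 1) := by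
    intro n; rw [hD]; simp
  -- pointwise relation
  have key : ∀ m : ℕ, (α + m + 1) * (β + m + 1) * D 0 (m + 1) + z * D 0 m = 0 := by
    intro m
    rw [hD0, hD0]
    have hpa := poch_ne_zero' α hα (m + 1)
    have hpb := poch_ne_zero' β hβ (m + 1)
    have hza : (-z) ^ (m + 1) ≠ 0 := pow_ne_zero _ (neg_ne_zero.mpr hz)
    have hza' : (-z : ℝ) ≠ 0 := neg_ne_zero.mpr hz
    have hab1 : α + (m : ℝ) + 1 ≠ 0 := by
      have := hα (m + 1); intro h; apply this; push_cast; linarith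
    have hab2 : β + (m : ℝ) + 1 ≠ 0 := by
      have := hβ (m + 1); intro h; apply this; push_cast; linarith
    have epa : poch α (m + 2) = poch α (m + 1) * (α + ((m + 1 : ℕ) : ℝ)) := rfl
    have epb : poch β (m + 2) = poch β (m + 1) * (β + ((m + 1 : ℕ) : ℝ)) := rfl
    have ha1 : a (m + 1) ≠ 0 := by
      rw [ha]; exact div_ne_zero (mul_ne_zero hpa hpb) hza
    have h2 : a (m + 2) = a (m + 1) * ((α + m + 1) * (β + m + 1)) / (-z) := by
      rw [ha (m + 2), ha (m + 1), epa, epb, pow_succ]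
      push_cast
      field_simp
      ring
    rw [show m + 1 + 1 = m + 2 from rfl, h2]
    field_simp
    ring
  -- auxiliary recurrence
  have R : ∀ k n : ℕ,
      (α + n + k + 1) * (β + n + k + 1) * D k (n + 1)
        + k * (α + β + 2 * n + 2 * k + 1) * D (k - 1) (n + 1)
        + k * ((k : ℝ) - 1) * D (k - 2) (n + 1)
        + z * D k n = 0 := by
    intro k
    induction k with
    | zero =>
      intro n
      push_cast
      linear_combination key n
    | succ k ih =>
      intro n
      have ihn := ih n
      have ihn1 := ih (n + 1)
      have P0 := pascal k n
      have P1 := pascal k (n + 1)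
      match k, ihn, ihn1, P0, P1 with
      | 0, ihn, ihn1, P0, P1 =>
        push_cast at ihn ihn1 ⊢
        linear_combination ihn1 - ihn + z * P0 + (α + n + 2) * (β + n + 2) * P1
      | 1, ihn, ihn1, P0, P1 =>
        have P2 := pascal 0 (n + 1)
        push_cast at ihn ihn1 ⊢
        linear_combination ihn1 - ihn + z * P0 + (α + n + 3) * (β + n + 3) * P1
          + (α + β + 2 * n + 5) * P2
      | (m + 2), ihn, ihn1, P0, P1 =>
        have P2 := pascal (m + 1) (n + 1)
        have P3 := pascal m (n + 1)
        simp only [show m + 2 - 1 = m + 1 from rfl, show m + 2 - 2 = m from rfl,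
          show m + 2 + 1 - 1 = m + 2 from rfl, show m + 2 + 1 - 2 = m + 1 from rfl] at ihn ihn1 ⊢
        push_cast at ihn ihn1 ⊢
        linear_combination ihn1 - ihn + z * P0 + (α + n + m + 4) * (β + n + m + 4) * P1
          + (m + 2) * (α + β + 2 * n + 2 * m + 7) * P2 + (m + 2) * (m + 1) * P3
  -- conclusion
  intro n k
  have Rk := R k n
  have P1 := pascal k n
  match k, Rk, P1 with
  | 0, Rk, P1 =>
    push_cast at Rk ⊢
    linear_combination Rk + (α + n + 1) * (β + n + 1) * P1
  | 1, Rk, P1 =>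
    have P2 := pascal 0 n
    push_cast at Rk ⊢
    linear_combination Rk + (α + n + 2) * (β + n + 2) * P1 + (α + β + 2 * n + 3) * P2
  | (m + 2), Rk, P1 =>
    have P2 := pascal (m + 1) n
    have P3 := pascal m n
    simp only [show m + 2 - 1 = m + 1 from rfl, show m + 2 - 2 = m from rfl] at Rk ⊢
    push_cast at Rk ⊢
    linear_combination Rk + (α + n + m + 3) * (β + n + m + 3) * P1
      + (m + 2) * (α + β + 2 * n + 2 * m + 5) * P2 + (m + 2) * (m + 1) * P3
end

section
/- Let α, β be real numbers, neither of which is a non-positive integer, let z ≠ 0 be real, and set a_m = (α)_m (β)_m / (−z)^m, s_n = Σ_{m=0}^n a_m, and N_n^{(k)} = Σ_{j=0}^k C(k,j) (−1)^{k−j} s_{n+j} / a_{n+j+1} for integers n ≥ 0, k ≥ 0, with the convention N_n^{(−1)} = 0. Then for all integers n ≥ 0 and k ≥ 1, (α+n+k+1)(β+n+k+1) N_n^{(k+1)} + [ z + k(α+β+2n+2k+1) + (α+n+k+1)(β+n+k+1) ] N_n^{(k)} + k(α+β+2n+3k) N_n^{(k−1)} + k(k−1) N_n^{(k−2)} = 0.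 -/
private lemma fwd_eq_sum (u : ℕ → ℝ) (k m : ℕ) :
    (fwdDiff 1)^[k] u m
      = ∑ j ∈ Finset.range (k+1), (-1:ℝ)^(k-j) * (Nat.choose k j : ℝ) * u (m+j) := by
  rw [fwdDiff_iter_eq_sum_shift]
  apply Finset.sum_congr rfl
  intro j hj
  push_cast [zsmul_eq_mul]
  ring_nf

private lemma stepJ (k : ℕ) (f : ℕ → ℝ) :
    ∑ j ∈ Finset.range (k+1+1), (-1:ℝ)^(k+1-j) * ((k+1).choose j : ℝ) * ((j:ℝ) * f j)
      = ((k:ℝ)+1) * ∑ i ∈ Finset.range (k+1), (-1:ℝ)^(k-i) * (k.choose i : ℝ) * f (i+1) := by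
  rw [Finset.sum_range_succ']
  simp only [Nat.cast_zero, zero_mul, mul_zero, add_zero]
  rw [Finset.mul_sum]
  refine Finset.sum_congr rfl fun i hi => ?_
  rw [Finset.mem_range] at hi
  have e : k+1-(i+1) = k-i := by omega
  have e2 := Nat.add_one_mul_choose_eq k i
  have e2' : ((k+1).choose (i+1) : ℝ) * ((i:ℝ)+1) = ((k:ℝ)+1) * (k.choose i : ℝ) := by
    exact_mod_cast congrArg (Nat.cast : ℕ → ℝ) e2.symm
  rw [e]
  push_cast
  linear_combination (-1:ℝ)^(k-i) * f (i+1) * e2'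

private lemma altsum (k : ℕ) (hk : k ≠ 0) :
    ∑ j ∈ Finset.range (k+1), (-1:ℝ)^(k-j) * (k.choose j : ℝ) = 0 := by
  have sq : ∀ j : ℕ, ((-1:ℝ))^j * (-1)^j = 1 := fun j => by
    rw [← pow_add]; exact Even.neg_one_pow ⟨j, rfl⟩
  have h1 : ∀ j ∈ Finset.range (k+1),
      (-1:ℝ)^(k-j) * (k.choose j : ℝ) = (-1:ℝ)^k * ((-1)^j * (k.choose j : ℝ)) := by
    intro j hj
    rw [Finset.mem_range] at hj
    have hjk : j ≤ k := by omega
    have p : ((-1:ℝ))^(k-j) * (-1)^j = (-1)^k := by rw [← pow_add, Nat.sub_add_cancel hjk]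
    have q := sq j
    have hs : ((-1:ℝ))^(k-j) = (-1:ℝ)^k * (-1)^j := by
      linear_combination ((-1:ℝ))^j * p - ((-1:ℝ))^(k-j) * q
    rw [hs]; ring
  rw [Finset.sum_congr rfl h1, ← Finset.mul_sum]
  have h2 := Int.alternating_sum_range_choose (n := k)
  rw [if_neg hk] at h2
  have h3 : (∑ i ∈ Finset.range (k+1), (-1:ℝ)^i * (k.choose i : ℝ)) = 0 := by
    exact_mod_cast congrArg (Int.cast : ℤ → ℝ) h2
  rw [h3, mul_zero]


/-- With `a_m = (α)_m (β)_m / (−z)^m`, `s_n = Σ_{m=0}^n a_m` and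
`N_n^{(k)} = Σ_{j=0}^k C(k,j) (−1)^{k−j} s_{n+j} / a_{n+j+1}` (and `N_n^{(−1)} = 0`),
the numerators of Drummond's sequence transformation satisfy, for all `n ≥ 0`, `k ≥ 1`,
`(α+n+k+1)(β+n+k+1) N_n^{(k+1)} + [z + k(α+β+2n+2k+1) + (α+n+k+1)(β+n+k+1)] N_n^{(k)}
 + k(α+β+2n+3k) N_n^{(k−1)} + k(k−1) N_n^{(k−2)} = 0`.
(The truncated subtraction `k − 2` is harmless: its coefficient `k(k−1)` vanishes for `k = 1`.) -/
theorem drummond_numerator_recurrence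
    (α β z : ℝ) (hα : ∀ m : ℕ, α ≠ -(m : ℝ)) (hβ : ∀ m : ℕ, β ≠ -(m : ℝ)) (hz : z ≠ 0)
    (a : ℕ → ℝ) (ha : ∀ m : ℕ, a m = poch α m * poch β m / (-z) ^ m)
    (s : ℕ → ℝ) (hs : ∀ n : ℕ, s n = ∑ m ∈ Finset.range (n + 1), a m)
    (N : ℕ → ℕ → ℝ)
    (hN : ∀ k n : ℕ, N k n =
      ∑ j ∈ Finset.range (k + 1),
        (Nat.choose k j : ℝ) * (-1) ^ (k - j) * s (n + j) / a (n + j + 1)) :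
    ∀ n k : ℕ, 1 ≤ k →
      (α + n + k + 1) * (β + n + k + 1) * N (k + 1) n +
        (z + k * (α + β + 2 * n + 2 * k + 1) + (α + n + k + 1) * (β + n + k + 1)) * N k n +
        k * (α + β + 2 * n + 3 * k) * N (k - 1) n +
        k * ((k : ℝ) - 1) * N (k - 2) n = 0 := by
  obtain ⟨u, hu⟩ : ∃ u : ℕ → ℝ, ∀ m, u m = s m / a (m+1) := ⟨_, fun m => rfl⟩
  -- nonvanishing
  have hpoch : ∀ (x:ℝ), (∀ m:ℕ, x ≠ -(m:ℝ)) → ∀ m, poch x m ≠ 0 := by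
    intro x hx m
    induction m with
    | zero => simp [poch]
    | succ n ih =>
        have : x + n ≠ 0 := fun h => hx n (by linarith)
        simp [poch, ih, this]
  have ha0 : ∀ m, a m ≠ 0 := by
    intro m
    rw [ha]
    exact div_ne_zero (mul_ne_zero (hpoch α hα m) (hpoch β hβ m)) (pow_ne_zero _ (neg_ne_zero.2 hz))
  have hzm : ∀ m : ℕ, ((-z):ℝ)^m ≠ 0 := fun m => pow_ne_zero _ (neg_ne_zero.2 hz)
  have haR : ∀ m : ℕ, a (m+1) * (-z) = a m * ((α+m)*(β+m)) := by
    intro m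
    rw [ha, ha]
    show poch α m * (α+(m:ℝ)) * (poch β m * (β+m)) / ((-z)^m*(-z)) * (-z) = _
    rw [div_mul_eq_mul_div, div_mul_eq_mul_div,
      div_eq_div_iff (mul_ne_zero (hzm m) (neg_ne_zero.2 hz)) (hzm m)]
    ring
  -- the basic recurrence for u
  have hrec : ∀ m : ℕ, (α+(m:ℝ)+1)*(β+(m:ℝ)+1) * u (m+1) + z * u m + z = 0 := by
    intro m
    rw [hu, hu]
    have h2 := haR (m+1)
    push_cast at h2
    have h3 : (α+(m:ℝ)+1)*(β+(m:ℝ)+1) / a (m+1+1) = (-z) / a (m+1) := by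
      rw [div_eq_div_iff (ha0 _) (ha0 _)]
      linear_combination -h2
    have e1 : s (m+1) = s m + a (m+1) := by rw [hs, hs, Finset.sum_range_succ]
    rw [show (α+(m:ℝ)+1)*(β+(m:ℝ)+1) * (s (m+1) / a (m+1+1))
        = s (m+1) * ((α+(m:ℝ)+1)*(β+(m:ℝ)+1) / a (m+1+1)) from by ring, h3, e1]
    have h1 := ha0 (m+1)
    field_simp
    ring
  -- N as alternating sum of u
  have hNsum : ∀ k m : ℕ, N k m
      = ∑ j ∈ Finset.range (k+1), (-1:ℝ)^(k-j) * (Nat.choose k j : ℝ) * u (m+j) := by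
    intro k m
    rw [hN k m]
    refine Finset.sum_congr rfl fun j _ => ?_
    rw [hu]
    ring
  have hNd : ∀ k m : ℕ, N k m = (fwdDiff 1)^[k] u m := by
    intro k m
    rw [hNsum, fwd_eq_sum]
  -- Pascal / shift rule
  have pasc : ∀ k m : ℕ, N k (m+1) = N (k+1) m + N k m := by
    intro k m
    have h1 : N (k+1) m = (fwdDiff 1)^[k+1] u m := hNd (k+1) m
    rw [Function.iterate_succ_apply'] at h1
    have h2 : fwdDiff 1 ((fwdDiff 1)^[k] u) m
        = (fwdDiff 1)^[k] u (m+1) - (fwdDiff 1)^[k] u m := rfl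
    rw [hNd k (m+1), hNd k m, h1, h2]
    ring
  -- the key recurrence, for k = K+1
  have keyG : ∀ K n : ℕ,
      (α+(n:ℝ)+1)*(β+(n:ℝ)+1) * N (K+1) (n+1)
      + (α+β+2*(n:ℝ)+3)*((K:ℝ)+1) * N K (n+1+1)
      + ((K:ℝ)+1) * (∑ i ∈ Finset.range (K+1),
          (-1:ℝ)^(K-i) * (Nat.choose K i : ℝ) * ((i:ℝ) * u (n+1+1+i)))
      + z * N (K+1) n = 0 := by
    intro K n
    have main : ∑ j ∈ Finset.range (K+1+1), (-1:ℝ)^(K+1-j) * ((K+1).choose j : ℝ)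
        * ((α+((n+j:ℕ):ℝ)+1)*(β+((n+j:ℕ):ℝ)+1) * u (n+j+1) + z * u (n+j) + z) = 0 :=
      Finset.sum_eq_zero fun j _ => by rw [hrec (n+j), mul_zero]
    have split : ∑ j ∈ Finset.range (K+1+1), (-1:ℝ)^(K+1-j) * ((K+1).choose j : ℝ)
        * ((α+((n+j:ℕ):ℝ)+1)*(β+((n+j:ℕ):ℝ)+1) * u (n+j+1) + z * u (n+j) + z)
      = (α+(n:ℝ)+1)*(β+(n:ℝ)+1)
          * (∑ j ∈ Finset.range (K+1+1), (-1:ℝ)^(K+1-j) * ((K+1).choose j : ℝ) * u (n+1+j))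
        + (α+β+2*(n:ℝ)+3)
          * (∑ j ∈ Finset.range (K+1+1),
              (-1:ℝ)^(K+1-j) * ((K+1).choose j : ℝ) * ((j:ℝ) * u (n+1+j)))
        + (∑ j ∈ Finset.range (K+1+1),
              (-1:ℝ)^(K+1-j) * ((K+1).choose j : ℝ) * ((j:ℝ) * (((j:ℝ)-1) * u (n+1+j))))
        + z * (∑ j ∈ Finset.range (K+1+1), (-1:ℝ)^(K+1-j) * ((K+1).choose j : ℝ) * u (n+j))
        + z * (∑ j ∈ Finset.range (K+1+1), (-1:ℝ)^(K+1-j) * ((K+1).choose j : ℝ)) := by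
      rw [Finset.mul_sum, Finset.mul_sum, Finset.mul_sum, Finset.mul_sum,
        ← Finset.sum_add_distrib, ← Finset.sum_add_distrib, ← Finset.sum_add_distrib,
        ← Finset.sum_add_distrib]
      refine Finset.sum_congr rfl fun j hj => ?_
      rw [show n+1+j = n+j+1 from by omega]
      push_cast
      ring
    rw [split, ← hNsum (K+1) (n+1), ← hNsum (K+1) n, altsum (K+1) (by omega),
      mul_zero, add_zero] at main
    have h3 := stepJ K (fun j => u (n+1+j))
    have h4 := stepJ K (fun j => ((j:ℝ)-1) * u (n+1+j))
    have r1 : ∑ i ∈ Finset.range (K+1), (-1:ℝ)^(K-i) * (Nat.choose K i : ℝ) * u (n+1+(i+1))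
        = N K (n+1+1) := by
      rw [hNsum K (n+1+1)]
      exact Finset.sum_congr rfl fun i _ => by rw [show n+1+(i+1) = n+1+1+i from by omega]
    have r2 : ∑ i ∈ Finset.range (K+1),
          (-1:ℝ)^(K-i) * (Nat.choose K i : ℝ) * ((((i+1:ℕ):ℝ)-1) * u (n+1+(i+1)))
        = ∑ i ∈ Finset.range (K+1),
          (-1:ℝ)^(K-i) * (Nat.choose K i : ℝ) * ((i:ℝ) * u (n+1+1+i)) := by
      refine Finset.sum_congr rfl fun i _ => ?_
      rw [show n+1+(i+1) = n+1+1+i from by omega]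
      push_cast
      ring
    rw [h3, r1, h4, r2] at main
    linear_combination main
  have Tlem : ∀ (L n' : ℕ),
      ∑ i ∈ Finset.range (L+1+1),
          (-1:ℝ)^(L+1-i) * ((L+1).choose i : ℝ) * ((i:ℝ) * u (n'+i))
      = ((L:ℝ)+1) * N L (n'+1) := by
    intro L n'
    have h := stepJ L (fun i => u (n'+i))
    rw [h, hNsum L (n'+1)]
    congr 1
    exact Finset.sum_congr rfl fun i _ => by rw [show n'+(i+1) = n'+1+i from by omega]
  intro n k hk
  obtain ⟨K, rfl⟩ : ∃ K, k = K+1 := ⟨k-1, by omega⟩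
  rcases K with _ | L
  · -- k = 1
    have kg := keyG 0 n
    have T0 : ∑ i ∈ Finset.range (0+1),
        (-1:ℝ)^(0-i) * (Nat.choose 0 i : ℝ) * ((i:ℝ) * u (n+1+1+i)) = 0 := by simp
    rw [T0, mul_zero, add_zero] at kg
    rw [pasc 0 (n+1), pasc (0+1) n, pasc 0 n] at kg
    rw [show (0+1-1 : ℕ) = 0 from rfl]
    push_cast at kg ⊢
    linear_combination kg
  · -- k = L+2
    have kg := keyG (L+1) n
    rw [Tlem L (n+1+1)] at kg
    rw [pasc L (n+1+1), pasc (L+1) (n+1), pasc L (n+1), pasc (L+1+1) n, pasc (L+1) n,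
      pasc L n] at kg
    rw [show (L+1+1-1 : ℕ) = L+1 from by omega, show (L+1+1-2 : ℕ) = L from by omega]
    push_cast at kg ⊢
    linear_combination kg
end

section
/- Let α > 0 and β > 0 be real and z > 0. With a_m = (α)_m (β)_m / (−z)^m and D_n^{(k)} = Σ_{j=0}^k C(k,j) (−1)^{k−j} / a_{n+j+1}, one has D_n^{(k)} ≠ 0 for all integers n ≥ 0 and k ≥ 0; hence the Drummond approximants T_n^{(k)} = N_n^{(k)}/D_n^{(k)} (with N_n^{(k)} = Σ_{j=0}^k C(k,j)(−1)^{k−j} s_{n+j}/a_{n+j+1} and s_n = Σ_{m=0}^n a_m) are well defined for every z > 0. -/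
lemma poch_pos {x : ℝ} (hx : 0 < x) : ∀ n, 0 < poch x n
  | 0 => by simp [poch]
  | n + 1 => by
      have := poch_pos hx n
      have hxn : (0:ℝ) < x + n := by positivity
      simpa [poch] using mul_pos this hxn

/-- For `α, β > 0` and `z > 0`, with `a_m = (α)_m (β)_m / (−z)^m` and
`D_n^{(k)} = Σ_{j=0}^k C(k,j) (−1)^{k−j} / a_{n+j+1}`, one has `D_n^{(k)} ≠ 0` for all
`n, k ≥ 0`; hence the Drummond approximants `T_n^{(k)} = N_n^{(k)}/D_n^{(k)}` (with
`N_n^{(k)} = Σ_{j=0}^k C(k,j)(−1)^{k−j} s_{n+j}/a_{n+j+1}`, `s_n = Σ_{m=0}^n a_m`) are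
well defined for every `z > 0`. -/
theorem drummond_denominator_nonzero
    (α β z : ℝ) (hα : 0 < α) (hβ : 0 < β) (hz : 0 < z)
    (a : ℕ → ℝ) (ha : ∀ m : ℕ, a m = poch α m * poch β m / (-z) ^ m)
    (D : ℕ → ℕ → ℝ)
    (hD : ∀ k n : ℕ, D k n =
      ∑ j ∈ Finset.range (k + 1), (Nat.choose k j : ℝ) * (-1) ^ (k - j) / a (n + j + 1)) :
    ∀ n k : ℕ, D k n ≠ 0 := by
  intro n k
  have key : D k n = (-1 : ℝ) ^ (k + n + 1) *
      ∑ j ∈ Finset.range (k + 1),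
        (Nat.choose k j : ℝ) * z ^ (n + j + 1) / (poch α (n + j + 1) * poch β (n + j + 1)) := by
    rw [hD, Finset.mul_sum]
    apply Finset.sum_congr rfl
    intro j hj
    have hjk : j ≤ k := Nat.lt_succ_iff.mp (Finset.mem_range.mp hj)
    have hPα := poch_pos hα (n + j + 1)
    have hPβ := poch_pos hβ (n + j + 1)
    rw [ha (n + j + 1)]
    have hzpow : ((-z) : ℝ) ^ (n + j + 1) = (-1) ^ (n + j + 1) * z ^ (n + j + 1) := by
      rw [neg_pow]
    have hsign : ((-1 : ℝ) ^ (k - j)) * (-1 : ℝ) ^ (n + j + 1) = (-1 : ℝ) ^ (k + n + 1) := by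
      rw [← pow_add]
      congr 1
      omega
    have h2 : (-1:ℝ) ^ (k - j) * (-1:ℝ) ^ j = (-1:ℝ) ^ k := by
      rw [← pow_add]; congr 1; omega
    field_simp [hzpow]
    ring_nf
    linear_combination (-(↑(k.choose j) * z * z ^ n * z ^ j * (-1:ℝ) ^ n)) * h2
  rw [key]
  have hpos : (0:ℝ) < ∑ j ∈ Finset.range (k + 1),
      (Nat.choose k j : ℝ) * z ^ (n + j + 1) / (poch α (n + j + 1) * poch β (n + j + 1)) := by
    apply Finset.sum_pos
    · intro j hj
      have hjk : j ≤ k := Nat.lt_succ_iff.mp (Finset.mem_range.mp hj)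
      have hC : (0:ℝ) < (Nat.choose k j : ℝ) := by
        exact_mod_cast Nat.choose_pos hjk
      have hPα := poch_pos hα (n + j + 1)
      have hPβ := poch_pos hβ (n + j + 1)
      positivity
    · exact ⟨0, Finset.mem_range.mpr (Nat.succ_pos k)⟩
  have hsgn : ((-1 : ℝ) ^ (k + n + 1)) ≠ 0 := by
    simp
  exact mul_ne_zero hsgn (ne_of_gt hpos)
end

section
/- Let (s_m)_{m≥0} be a real sequence with Δs_m = s_{m+1} − s_m ≠ 0 for all m, let k ≥ 1 and n ≥ 0 be integers, and suppose there exist a real number s and a polynomial p of degree at most k − 1 such that s − s_m = (Δs_m) p(m) for all m ≥ n. Define D_n^{(k)} = Σ_{j=0}^k C(k,j)(−1)^{k−j} / Δs_{n+j} and N_n^{(k)} = Σ_{j=0}^k C(k,j)(−1)^{k−j} s_{n+j} / Δs_{n+j}. If D_n^{(k)} ≠ 0, then N_n^{(k)} / D_n^{(k)} = s. -/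
/-- The `k`-th forward difference annihilates polynomials of degree `< k`. -/
lemma fwdDiff_iter_poly_eval_eq_zero :
    ∀ (k : ℕ) (p : Polynomial ℝ), p.degree < (k : WithBot ℕ) →
      ∀ y : ℝ, (fwdDiff (1:ℝ))^[k] (fun x : ℝ => p.eval x) y = 0 := by
  intro k
  induction k with
  | zero =>
    intro p hp y
    have h0 : p.degree < 0 := by exact_mod_cast hp
    have : p = 0 := Polynomial.degree_eq_bot.mp (Nat.WithBot.lt_zero_iff.mp h0)
    subst this
    simp
  | succ k IH =>
    intro p hp y
    by_cases h0 : p = 0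
    · subst h0
      simp only [Polynomial.eval_zero, Function.iterate_succ_apply]
      have : (fwdDiff (1:ℝ) fun _ : ℝ => (0:ℝ)) = fun _ : ℝ => (0:ℝ) := by
        funext x; simp [fwdDiff]
      rw [this, fwdDiff_iter_eq_sum_shift]
      simp
    · set q : Polynomial ℝ := p.comp (Polynomial.X + Polynomial.C 1) - p with hq
      have hXc : (Polynomial.X + Polynomial.C (1:ℝ)).natDegree = 1 :=
        Polynomial.natDegree_X_add_C 1
      have hcomp_lead : (p.comp (Polynomial.X + Polynomial.C 1)).leadingCoeff
          = p.leadingCoeff := by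
        rw [Polynomial.leadingCoeff_comp (by rw [hXc]; exact one_ne_zero),
          Polynomial.leadingCoeff_X_add_C, one_pow, mul_one]
      have hcomp_ne : p.comp (Polynomial.X + Polynomial.C 1) ≠ 0 := by
        intro h
        have := hcomp_lead
        rw [h, Polynomial.leadingCoeff_zero] at this
        exact h0 (Polynomial.leadingCoeff_eq_zero.mp this.symm)
      have hcomp_deg : (p.comp (Polynomial.X + Polynomial.C 1)).degree = p.degree := by
        rw [Polynomial.degree_eq_natDegree hcomp_ne, Polynomial.degree_eq_natDegree h0,
          Polynomial.natDegree_comp, hXc, mul_one]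
      have hqdeg : q.degree < p.degree :=
        hcomp_deg ▸ Polynomial.degree_sub_lt hcomp_deg hcomp_ne hcomp_lead
      have hqk : q.degree < (k : WithBot ℕ) := by
        have hplt : p.degree ≤ (k : WithBot ℕ) := by
          rw [Polynomial.degree_eq_natDegree h0] at hp ⊢
          exact_mod_cast Nat.lt_succ_iff.mp (by exact_mod_cast hp)
        exact lt_of_lt_of_le hqdeg hplt
      have hstep : fwdDiff (1:ℝ) (fun x : ℝ => p.eval x) = fun x : ℝ => q.eval x := by
        funext x
        simp [fwdDiff, hq, Polynomial.eval_comp]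
      rw [Function.iterate_succ_apply, hstep]
      exact IH q hqk y

/-- Let `(s_m)` be a real sequence with `Δs_m = s_{m+1} − s_m ≠ 0` for all
`m`, let `k ≥ 1`, `n ≥ 0`, and suppose there exist `s ∈ ℝ` and a polynomial `p` of degree at
most `k − 1` with `s − s_m = (Δs_m) p(m)` for all `m ≥ n`. Define
`D_n^{(k)} = Σ_{j=0}^k C(k,j)(−1)^{k−j}/Δs_{n+j}` and
`N_n^{(k)} = Σ_{j=0}^k C(k,j)(−1)^{k−j} s_{n+j}/Δs_{n+j}`. If `D_n^{(k)} ≠ 0`, then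
`N_n^{(k)}/D_n^{(k)} = s`: Drummond's transformation is exact for remainders with polynomial
correction terms of degree at most `k − 1`. -/
theorem drummond_exactness
    (s : ℕ → ℝ) (hΔ : ∀ m : ℕ, s (m + 1) - s m ≠ 0)
    (k n : ℕ) (hk : 1 ≤ k)
    (slim : ℝ) (p : Polynomial ℝ) (hdeg : p.degree ≤ ((k - 1 : ℕ) : WithBot ℕ))
    (hp : ∀ m : ℕ, n ≤ m → slim - s m = (s (m + 1) - s m) * p.eval (m : ℝ))
    (hD : (∑ j ∈ Finset.range (k + 1),
      (Nat.choose k j : ℝ) * (-1) ^ (k - j) / (s (n + j + 1) - s (n + j))) ≠ 0) :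
    (∑ j ∈ Finset.range (k + 1),
        (Nat.choose k j : ℝ) * (-1) ^ (k - j) * s (n + j) / (s (n + j + 1) - s (n + j))) /
      (∑ j ∈ Finset.range (k + 1),
        (Nat.choose k j : ℝ) * (-1) ^ (k - j) / (s (n + j + 1) - s (n + j)))
      = slim := by
  have hdeg' : p.degree < (k : WithBot ℕ) := by
    refine lt_of_le_of_lt hdeg ?_
    exact_mod_cast Nat.sub_lt (by omega) one_pos
  -- the alternating binomial sum of p-values vanishes
  have hS : ∑ j ∈ Finset.range (k + 1),
      (Nat.choose k j : ℝ) * (-1) ^ (k - j) * p.eval ((n : ℝ) + j) = 0 := by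
    have h := fwdDiff_iter_eq_sum_shift (1 : ℝ) (fun x : ℝ => p.eval x) k (n : ℝ)
    rw [fwdDiff_iter_poly_eval_eq_zero k p hdeg' (n : ℝ)] at h
    have : ∑ j ∈ Finset.range (k + 1),
        (Nat.choose k j : ℝ) * (-1) ^ (k - j) * p.eval ((n : ℝ) + j)
        = ∑ j ∈ Finset.range (k + 1),
          ((-1 : ℤ) ^ (k - j) * (Nat.choose k j : ℤ)) •
            (fun x : ℝ => p.eval x) ((n : ℝ) + j • (1 : ℝ)) := by
      refine Finset.sum_congr rfl fun j _ => ?_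
      simp only [zsmul_eq_mul, nsmul_eq_mul, mul_one]
      push_cast
      ring
    rw [this, ← h]
  -- rewrite each numerator term
  have hterm : ∀ j ∈ Finset.range (k + 1),
      (Nat.choose k j : ℝ) * (-1) ^ (k - j) * s (n + j) / (s (n + j + 1) - s (n + j))
      = (Nat.choose k j : ℝ) * (-1) ^ (k - j) / (s (n + j + 1) - s (n + j)) * slim
        - (Nat.choose k j : ℝ) * (-1) ^ (k - j) * p.eval ((n : ℝ) + j) := by
    intro j _
    have hps := hp (n + j) (Nat.le_add_right n j)
    have hne := hΔ (n + j)
    have hsval : s (n + j) = slim - (s (n + j + 1) - s (n + j)) * p.eval ((n : ℝ) + j) := by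
      push_cast at hps
      linarith [hps]
    have key : ∀ (c d x : ℝ), d ≠ 0 → c * (slim - d * x) / d = c / d * slim - c * x := by
      intro c d x hd
      field_simp
    nth_rewrite 1 [hsval]
    exact key _ _ _ hne
  rw [Finset.sum_congr rfl hterm, Finset.sum_sub_distrib, ← Finset.sum_mul, hS, sub_zero,
    mul_comm, mul_div_assoc, div_self hD, mul_one]
end
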